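/- arXiv:1412.2026 — 2 statements merged into one kernel-verified Lean document; each statement's English description precedes it below -/
import Mathlib

section
/- Let L be a random variable in ℝ^ν with P(L ∈ l_0 + ℤ^ν) = 1, where l_0 = (0,…,0,p/q) for coprime integers 0 ≤ p < q, and suppose that for v ∈ ℝ^ν, |E e^{2πi⟨v,L⟩}| = 1 if and only if v ∈ ℤ^ν. Then, with D = diag(1,…,1,q), the random variable DL takes values in ℤ^ν and is aperiodic. -/
open MeasureTheory ProbabilityTheory Filter Set Real

noncomputable section

/-- **Proposition 1.2, part 2)**: let `L ∈ ℝ^ν` be a random variable with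
`P(L ∈ l₀ + ℤ^ν) = 1`, where `l₀ = (0,…,0,p/q)` for coprime integers `0 ≤ p < q`, and such
that for `v ∈ ℝ^ν`, `|E e^{2πi⟨v,L⟩}| = 1` iff `v ∈ ℤ^ν`.  Then, with `D = diag(1,…,1,q)`,
the random variable `DL` takes values in `ℤ^ν` (almost surely) and is aperiodic, i.e.
for `t ∈ ℝ^ν`: `⟨t, DL⟩ ∈ ℤ` almost surely iff `t ∈ ℤ^ν`. -/
theorem DL_aperiodic {ν : ℕ} (hν : 0 < ν) {Ω : Type} [MeasureSpace Ω]
    [IsProbabilityMeasure (ℙ : Measure Ω)]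
    (L : Ω → EuclideanSpace ℝ (Fin ν)) (hL : Measurable L)
    (p q : ℕ) (hpq : p < q) (hcop : Nat.Coprime p q)
    (hlat : ∀ᵐ ω ∂ℙ, ∀ i : Fin ν,
      ∃ k : ℤ, L ω i = (if (i : ℕ) = ν - 1 then (p : ℝ) / (q : ℝ) else 0) + (k : ℝ))
    (hchar : ∀ v : EuclideanSpace ℝ (Fin ν),
      ‖(∫ ω, Complex.exp (((2 * π * (inner ℝ v (L ω) : ℝ) : ℝ) : ℂ) * Complex.I) ∂ℙ)‖
          = 1 ↔ ∀ i, ∃ k : ℤ, v i = (k : ℝ)) :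
    (∀ᵐ ω ∂ℙ, ∀ i : Fin ν,
      ∃ k : ℤ, (if (i : ℕ) = ν - 1 then (q : ℝ) else 1) * L ω i = (k : ℝ)) ∧
    (∀ t : Fin ν → ℝ,
      (∀ᵐ ω ∂ℙ, ∃ k : ℤ,
        (∑ i, t i * ((if (i : ℕ) = ν - 1 then (q : ℝ) else 1) * L ω i)) = (k : ℝ)) ↔
      ∀ i, ∃ k : ℤ, t i = (k : ℝ)) := by
  have hq0 : 0 < q := lt_of_le_of_lt (Nat.zero_le p) hpq
  have hqR : (q : ℝ) ≠ 0 := by positivity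
  have part1 : ∀ᵐ ω ∂ℙ, ∀ i : Fin ν,
      ∃ k : ℤ, (if (i : ℕ) = ν - 1 then (q : ℝ) else 1) * L ω i = (k : ℝ) := by
    filter_upwards [hlat] with ω h i
    obtain ⟨k, hk⟩ := h i
    by_cases hi : (i : ℕ) = ν - 1
    · refine ⟨(p : ℤ) + q * k, ?_⟩
      simp only [hi, if_pos rfl] at hk ⊢
      rw [hk]
      push_cast
      field_simp
    · refine ⟨k, ?_⟩
      simp only [hi, if_neg, ite_false] at hk ⊢
      rw [hk]
      ring
  refine ⟨part1, fun t => ⟨?_, ?_⟩⟩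
  · -- forward: a.s. integrality implies t ∈ ℤ^ν
    intro hInt
    set v : EuclideanSpace ℝ (Fin ν) :=
      WithLp.toLp 2 (fun i => t i * (if (i : ℕ) = ν - 1 then (q : ℝ) else 1)) with hvdef
    have hinner : ∀ ω, (inner ℝ v (L ω) : ℝ)
        = ∑ i, t i * ((if (i : ℕ) = ν - 1 then (q : ℝ) else 1) * L ω i) := by
      intro ω
      simp only [PiLp.inner_apply, RCLike.inner_apply, conj_trivial, hvdef]
      exact Finset.sum_congr rfl fun j _ => by ring
    have hone : (∫ ω, Complex.exp (((2 * π * (inner ℝ v (L ω) : ℝ) : ℝ) : ℂ) * Complex.I) ∂ℙ)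
        = 1 := by
      have hae : ∀ᵐ ω ∂ℙ,
          Complex.exp (((2 * π * (inner ℝ v (L ω) : ℝ) : ℝ) : ℂ) * Complex.I) = (1 : ℂ) := by
        filter_upwards [hInt] with ω hω
        obtain ⟨k, hk⟩ := hω
        rw [hinner ω, hk]
        rw [← Complex.exp_int_mul_two_pi_mul_I k]
        congr 1
        push_cast
        ring
      rw [integral_congr_ae hae, integral_const]
      simp
    have hv' : ∀ i, ∃ k : ℤ, v i = (k : ℝ) := (hchar v).mp (by rw [hone]; simp)
    intro i
    by_cases hi : (i : ℕ) = ν - 1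
    · obtain ⟨m, hm⟩ := hv' i
      have hm' : t i * (q : ℝ) = (m : ℝ) := by simpa [hvdef, hi] using hm
      -- pick a sample point where both a.s. events hold
      obtain ⟨ω, hωlat, hωint⟩ := (hlat.and hInt).exists
      choose kk hkk using hωlat
      choose n hn using hv'
      obtain ⟨K, hK⟩ := hωint
      have hterm : ∀ j : Fin ν,
          t j * ((if (j : ℕ) = ν - 1 then (q : ℝ) else 1) * L ω j)
            = (n j : ℝ) * (kk j : ℝ) + (if j = i then ((n i : ℝ) * p) / q else 0) := by
        intro j
        have hvj : t j * (if (j : ℕ) = ν - 1 then (q : ℝ) else 1) = (n j : ℝ) := hn j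
        by_cases hj : j = i
        · subst hj
          rw [← mul_assoc, hvj, hkk j]
          simp only [hi, if_pos rfl, if_pos rfl, ite_true]
          field_simp
          ring
        · have hj' : (j : ℕ) ≠ ν - 1 := by
            intro h
            exact hj (Fin.ext (h.trans hi.symm))
          rw [← mul_assoc, hvj, hkk j]
          simp only [hj', if_neg, ite_false, if_neg hj]
          ring
      have hKsum : (K : ℝ) = (∑ j, (n j : ℝ) * (kk j : ℝ)) + ((n i : ℝ) * p) / q := by
        rw [← hK, Finset.sum_congr rfl fun j _ => hterm j, Finset.sum_add_distrib,
          Finset.sum_ite_eq' Finset.univ i fun _ => ((n i : ℝ) * p) / q]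
        simp
      have hJ : ((n i : ℝ) * p) / q = ((K - ∑ j, n j * kk j : ℤ) : ℝ) := by
        push_cast
        rw [hKsum]
        ring
      set J : ℤ := K - ∑ j, n j * kk j with hJdef
      have hniq : (n i : ℤ) * p = J * q := by
        have : ((n i : ℝ) * p) = (J : ℝ) * q := by
          rw [← hJ]
          field_simp
        exact_mod_cast this
      have hdvd : (q : ℤ) ∣ n i * p := ⟨J, by linarith [hniq]⟩
      have hco : IsCoprime (q : ℤ) (p : ℤ) := Int.isCoprime_iff_gcd_eq_one.mpr (by
        simpa [Int.gcd, Nat.Coprime] using hcop.symm)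
      have hdvd' : (q : ℤ) ∣ n i := hco.dvd_of_dvd_mul_right hdvd
      obtain ⟨r, hr⟩ := hdvd'
      refine ⟨r, ?_⟩
      have hni : (n i : ℝ) = (q : ℝ) * r := by exact_mod_cast congrArg (Int.cast : ℤ → ℝ) hr
      have htn : t i * (q : ℝ) = (n i : ℝ) := by
        rw [← hn i]; simp [hvdef, hi]
      have : t i * (q : ℝ) = (r : ℝ) * q := by rw [htn, hni]; ring
      exact mul_right_cancel₀ hqR this
    · obtain ⟨m, hm⟩ := hv' i
      exact ⟨m, by simpa [hvdef, hi] using hm⟩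
  · -- backward: t ∈ ℤ^ν implies a.s. integrality
    intro ht
    filter_upwards [part1] with ω h
    choose kk hkk using h
    choose m hm using ht
    refine ⟨∑ j, m j * kk j, ?_⟩
    push_cast
    exact Finset.sum_congr rfl fun j _ => by rw [hm j, hkk j]
end
end

section
/- There is a constant c_d > 0 depending only on the dimension d such that for every random variable X in ℝ^d, every h ≥ 0 and every a > 0: Q_X(h) ≤ c_d (max(1/a, h))^d ∫_{‖t‖ ≤ a} |φ_X(t)| dt. -/
open MeasureTheory ProbabilityTheory Filter Set Real

noncomputable section

/-- Euclidean space ℝ^d. -/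
abbrev E (d : ℕ) := EuclideanSpace ℝ (Fin d)

/-- The half-open cube `h·[0,1)^d`. -/
def cube (d : ℕ) (h : ℝ) : Set (E d) := {x | ∀ i, x i ∈ Ico (0:ℝ) h}

/-- The characteristic function `φ(t) = ∫ e^{i⟨t,x⟩} μ(dx)`. -/
def charFun' {d : ℕ} (μ : Measure (E d)) (t : E d) : ℂ :=
  ∫ x, Complex.exp (((inner ℝ t x : ℝ) : ℂ) * Complex.I) ∂μ

section Aux

def oneD (a w : ℝ) : ℂ := ∫ s in Ioc (-(a/2)) (a/2), Complex.exp ((s * w : ℝ) * Complex.I)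

lemma cont_exp_mul_I (w : ℝ) : Continuous fun s : ℝ => Complex.exp ((↑(s * w) : ℂ) * Complex.I) := by
  fun_prop

lemma intOn_exp (w : ℝ) (a : ℝ) :
    IntegrableOn (fun s : ℝ => Complex.exp ((↑(s * w) : ℂ) * Complex.I)) (Ioc (-(a/2)) (a/2)) :=
  (cont_exp_mul_I w).integrableOn_Ioc

lemma abs_oneD_le {a : ℝ} (ha : 0 < a) (w : ℝ) : ‖oneD a w‖ ≤ a := by
  have : ‖oneD a w‖ ≤ a := by
    refine (norm_integral_le_integral_norm _).trans ?_
    have : ∀ s : ℝ, ‖Complex.exp ((↑(s * w) : ℂ) * Complex.I)‖ = 1 := fun s => by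
      simpa using Complex.norm_exp_ofReal_mul_I (s * w)
    simp only [this]
    rw [setIntegral_const]
    simp only [smul_eq_mul, mul_one, Real.volume_Ioc]
    rw [measureReal_def, Real.volume_Ioc, ENNReal.toReal_ofReal (by linarith)]
    linarith
  simpa using this

lemma re_oneD_ge {a w : ℝ} (ha : 0 < a) (hw : |w| ≤ a⁻¹) : 23/24 * a ≤ (oneD a w).re := by
  have hmeas : MeasurableSet (Ioc (-(a/2)) (a/2)) := measurableSet_Ioc
  have h1 : (oneD a w).re = ∫ s in Ioc (-(a/2)) (a/2), Real.cos (s * w) := by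
    have h0 := ContinuousLinearMap.integral_comp_comm (RCLike.reCLM (K := ℂ)) (intOn_exp w a)
    simp only [RCLike.reCLM_apply, RCLike.re_to_complex] at h0
    rw [oneD, ← h0]
    exact setIntegral_congr_fun hmeas fun s _ => Complex.exp_ofReal_mul_I_re (s*w)
  rw [h1]
  have h2 : ∀ s ∈ Ioc (-(a/2)) (a/2), 1 - (s*w)^2/2 ≤ Real.cos (s * w) := fun s _ =>
    Real.one_sub_sq_div_two_le_cos
  have hint2 : IntegrableOn (fun s : ℝ => 1 - (s*w)^2/2) (Ioc (-(a/2)) (a/2)) := by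
    apply Continuous.integrableOn_Ioc; fun_prop
  have hint1 : IntegrableOn (fun s : ℝ => Real.cos (s * w)) (Ioc (-(a/2)) (a/2)) := by
    apply Continuous.integrableOn_Ioc; fun_prop
  have h3 : ∫ s in Ioc (-(a/2)) (a/2), (1 - (s*w)^2/2) ≤ ∫ s in Ioc (-(a/2)) (a/2), Real.cos (s*w) :=
    setIntegral_mono_on hint2 hint1 hmeas h2
  refine le_trans ?_ h3
  have hle : -(a/2) ≤ a/2 := by linarith
  rw [← intervalIntegral.integral_of_le hle]
  have : ∫ s in (-(a/2))..(a/2), (1 - (s*w)^2/2) = a - w^2 * a^3 / 24 := by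
    have : ∀ s : ℝ, 1 - (s*w)^2/2 = 1 - (w^2/2) * s^2 := by intro s; ring
    simp_rw [this]
    rw [intervalIntegral.integral_sub intervalIntegrable_const (by apply IntervalIntegrable.const_mul; exact intervalIntegral.intervalIntegrable_pow 2)]
    rw [intervalIntegral.integral_const_mul, integral_pow, intervalIntegral.integral_const]
    simp only [smul_eq_mul, mul_one]
    ring
  rw [this]
  have hw2 : w^2 ≤ (a⁻¹)^2 := by
    have := abs_nonneg w
    nlinarith [sq_abs w]
  have : w^2 * a^3 ≤ (a⁻¹)^2 * a^3 := by nlinarith [pow_pos ha 3]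
  have ha' : (a⁻¹)^2 * a^3 = a := by field_simp
  nlinarith



lemma pi_prod (d : ℕ) (S : Set ℝ) (hS : MeasurableSet S) (f : Fin d → ℝ → ℂ)
    (hf : ∀ i, IntegrableOn (f i) S) :
    ∫ t in Set.pi univ (fun _ => S), ∏ j, f j (t j) ∂(volume : Measure (Fin d → ℝ)) =
      ∏ j, ∫ s in S, f j s := by
  classical
  rw [← integral_indicator (MeasurableSet.univ_pi fun _ => hS)]
  have hind : (Set.pi univ fun _ => S).indicator (fun t : Fin d → ℝ => ∏ j, f j (t j)) =
      fun t => ∏ j, S.indicator (f j) (t j) := by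
    funext t
    by_cases ht : t ∈ Set.pi univ fun _ => S
    · rw [indicator_of_mem ht]
      exact Finset.prod_congr rfl fun j _ => (indicator_of_mem (ht j (mem_univ j)) _).symm
    · rw [indicator_of_notMem ht]
      rw [Set.mem_univ_pi] at ht
      push_neg at ht
      obtain ⟨j, hj⟩ := ht
      exact (Finset.prod_eq_zero (Finset.mem_univ j) (indicator_of_notMem hj _)).symm
  rw [hind, MeasureTheory.integral_fintype_prod_volume_eq_prod (fun j => S.indicator (f j))]
  exact Finset.prod_congr rfl fun j _ => by rw [integral_indicator hS]

def boxS (d : ℕ) (a : ℝ) : Set (E d) := {t | ∀ i, t i ∈ Ioc (-(a/2)) (a/2)}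

lemma boxS_eq (d : ℕ) (a : ℝ) : boxS d a =
    (MeasurableEquiv.toLp 2 (Fin d → ℝ)).symm ⁻¹' (Set.pi univ fun _ => Ioc (-(a/2)) (a/2)) := by
  ext t
  simp [boxS, Set.mem_pi]

lemma measurableSet_boxS (d : ℕ) (a : ℝ) : MeasurableSet (boxS d a) := by
  rw [boxS_eq]
  exact (MeasurableEquiv.toLp 2 (Fin d → ℝ)).symm.measurable
    (MeasurableSet.univ_pi fun _ => measurableSet_Ioc)

lemma volume_boxS (d : ℕ) {a : ℝ} (ha : 0 < a) :
    volume (boxS d a) = ENNReal.ofReal a ^ d := by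
  rw [boxS_eq, (EuclideanSpace.volume_preserving_symm_measurableEquiv_toLp (Fin d)).measure_preimage
    (MeasurableSet.univ_pi fun _ => measurableSet_Ioc).nullMeasurableSet]
  rw [volume_pi_pi]
  simp only [Real.volume_Ioc]
  rw [Finset.prod_const]
  norm_num

lemma setIntegral_boxS_prod (d : ℕ) (a : ℝ) (f : Fin d → ℝ → ℂ)
    (hf : ∀ j, IntegrableOn (f j) (Ioc (-(a/2)) (a/2))) :
    ∫ t in boxS d a, ∏ j, f j (t j) = ∏ j, ∫ s in Ioc (-(a/2)) (a/2), f j s := by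
  rw [boxS_eq]
  have h := (EuclideanSpace.volume_preserving_symm_measurableEquiv_toLp (Fin d)).setIntegral_preimage_emb
    (MeasurableEquiv.measurableEmbedding _) (fun t : Fin d → ℝ => ∏ j, f j (t j))
    (Set.pi univ fun _ => Ioc (-(a/2)) (a/2))
  exact h.trans (pi_prod d _ measurableSet_Ioc f hf)


lemma inner_eq {d : ℕ} (t x : E d) : (inner ℝ t x : ℝ) = ∑ i, t i * x i := by
  simp [PiLp.inner_apply, RCLike.inner_apply, conj_trivial, mul_comm]

lemma cont_oneD (a : ℝ) : Continuous fun w => oneD a w := by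
  apply continuous_of_dominated (bound := fun _ => (1:ℝ))
  · exact fun w => (cont_exp_mul_I w).aestronglyMeasurable
  · intro w
    refine Eventually.of_forall fun s => ?_
    rw [Complex.norm_exp_ofReal_mul_I]
  · exact integrable_const 1
  · exact Eventually.of_forall fun s => by fun_prop

def Ffun (d : ℕ) (a : ℝ) (z y : E d) : ℂ :=
  ∫ t in boxS d a, Complex.exp (((inner ℝ t (y - z) : ℝ) : ℂ) * Complex.I)

lemma Ffun_eq_prod (d : ℕ) (a : ℝ) (z y : E d) :
    Ffun d a z y = ∏ j, oneD a (y j - z j) := by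
  have hpt : ∀ t : E d, Complex.exp (((inner ℝ t (y - z) : ℝ) : ℂ) * Complex.I) =
      ∏ j, Complex.exp (((t j * (y j - z j) : ℝ) : ℂ) * Complex.I) := by
    intro t
    rw [← Complex.exp_sum]
    congr 1
    rw [inner_eq]
    push_cast
    rw [Finset.sum_mul]
    congr 1
    funext j
    congr 2
    simp [PiLp.sub_apply]
  rw [Ffun]
  simp_rw [hpt]
  exact setIntegral_boxS_prod d a _ (fun j => intOn_exp (y j - z j) a)

lemma abs_Ffun_le {d : ℕ} {a : ℝ} (ha : 0 < a) (z y : E d) :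
    ‖Ffun d a z y‖ ≤ a ^ d := by
  rw [Ffun_eq_prod, norm_prod]
  calc ∏ j, ‖oneD a (y j - z j)‖ ≤ ∏ _j : Fin d, a :=
        Finset.prod_le_prod (fun j _ => norm_nonneg _) (fun j _ => abs_oneD_le ha _)
    _ = a ^ d := by rw [Finset.prod_const, Finset.card_univ, Fintype.card_fin]

lemma abs_Ffun_ge {d : ℕ} {a : ℝ} (ha : 0 < a) (z y : E d)
    (hy : ∀ i, |y i - z i| ≤ a⁻¹) : (23/24 * a) ^ d ≤ ‖Ffun d a z y‖ := by
  rw [Ffun_eq_prod, norm_prod]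
  calc ((23:ℝ)/24 * a) ^ d = ∏ _j : Fin d, (23/24 * a) := by
        rw [Finset.prod_const, Finset.card_univ, Fintype.card_fin]
    _ ≤ ∏ j, ‖oneD a (y j - z j)‖ :=
        Finset.prod_le_prod (fun j _ => by positivity)
          (fun j _ => (re_oneD_ge ha (hy j)).trans (Complex.re_le_norm _))

lemma cont_Ffun (d : ℕ) (a : ℝ) (z : E d) : Continuous fun y => Ffun d a z y := by
  have : (fun y => Ffun d a z y) = fun y => ∏ j, oneD a (y j - z j) := by
    funext y; exact Ffun_eq_prod d a z y
  rw [this]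
  refine continuous_finset_prod _ fun j _ => ?_
  exact (cont_oneD a).comp (((continuous_apply j).comp (PiLp.continuous_ofLp 2 _)).sub continuous_const)

lemma cont_coord {d : ℕ} (i : Fin d) : Continuous fun y : E d => y i :=
  (continuous_apply i).comp (PiLp.continuous_ofLp 2 _)

def bigBox (d : ℕ) (a : ℝ) : Set (E d) := {t | ∀ i, |t i| ≤ a}

lemma measurableSet_bigBox (d : ℕ) (a : ℝ) : MeasurableSet (bigBox d a) := by
  have : bigBox d a = ⋂ i, {t : E d | |t i| ≤ a} := by ext t; simp [bigBox, Set.mem_iInter]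
  rw [this]
  exact MeasurableSet.iInter fun i =>
    (isClosed_le (cont_coord i).abs continuous_const).measurableSet

lemma volume_bigBox_lt_top (d : ℕ) {a : ℝ} (ha : 0 < a) : volume (bigBox d a) < ⊤ := by
  have hsub : bigBox d a ⊆ boxS d (2*a+2) := by
    intro t ht i
    constructor
    · have := (abs_le.mp (ht i)).1; linarith
    · have := (abs_le.mp (ht i)).2; linarith
  calc volume (bigBox d a) ≤ volume (boxS d (2*a+2)) := measure_mono hsub
    _ = ENNReal.ofReal (2*a+2) ^ d := volume_boxS d (by linarith)
    _ < ⊤ := ENNReal.pow_lt_top ENNReal.ofReal_lt_top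

lemma abs_charFun'_le_one {d : ℕ} (μ : Measure (E d)) [IsProbabilityMeasure μ] (t : E d) :
    ‖charFun' μ t‖ ≤ 1 := by
  rw [charFun']
  refine (norm_integral_le_integral_norm _).trans ?_
  have h : ∀ x : E d, ‖Complex.exp (((inner ℝ t x : ℝ) : ℂ) * Complex.I)‖ = 1 := fun x => by
    rw [Complex.norm_exp_ofReal_mul_I]
  simp only [h]
  simp

lemma cont_exp_inner_right {d : ℕ} (x : E d) :
    Continuous fun t : E d => Complex.exp (((inner ℝ t x : ℝ) : ℂ) * Complex.I) :=
  Complex.continuous_exp.comp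
    ((Complex.continuous_ofReal.comp (Continuous.inner continuous_id continuous_const)).mul
      continuous_const)

lemma cont_charFun' {d : ℕ} (μ : Measure (E d)) [IsFiniteMeasure μ] :
    Continuous (charFun' μ) := by
  apply continuous_of_dominated (bound := fun _ => (1:ℝ))
  · intro t
    exact (Complex.continuous_exp.comp
      ((Complex.continuous_ofReal.comp (Continuous.inner continuous_const continuous_id)).mul
        continuous_const)).aestronglyMeasurable
  · intro t
    exact Filter.Eventually.of_forall fun x => by
      rw [Complex.norm_exp_ofReal_mul_I]
  · exact integrable_const 1
  · exact Filter.Eventually.of_forall fun x => cont_exp_inner_right x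

lemma intOn_absCharFun {d : ℕ} (μ : Measure (E d)) [IsProbabilityMeasure μ] {a : ℝ} (ha : 0 < a) :
    IntegrableOn (fun t => ‖charFun' μ t‖) (bigBox d a) := by
  haveI : IsFiniteMeasure (volume.restrict (bigBox d a)) :=
    ⟨by rw [Measure.restrict_apply_univ]; exact volume_bigBox_lt_top d ha⟩
  refine Integrable.mono' (integrable_const (1:ℝ))
    ((continuous_norm.comp (cont_charFun' μ)).aestronglyMeasurable.restrict)
    (Filter.Eventually.of_forall fun t => ?_)
  rw [Real.norm_eq_abs, abs_of_nonneg (norm_nonneg _)]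
  exact abs_charFun'_le_one μ t

lemma lemmaA (d : ℕ) (μ : Measure (E d)) [IsProbabilityMeasure μ] {a : ℝ} (ha : 0 < a) (z : E d) :
    (μ {y : E d | ∀ i, |y i - z i| ≤ a⁻¹}).toReal ≤
      ((24:ℝ)/23)^(2*d) * (a⁻¹)^d * ∫ t in bigBox d a, ‖charFun' μ t‖ := by
  set C := ∫ t in bigBox d a, ‖charFun' μ t‖ with hC
  set small : Set (E d) := {y : E d | ∀ i, |y i - z i| ≤ a⁻¹} with hsmall
  have hsmallmeas : MeasurableSet small := by
    have : small = ⋂ i, {y : E d | |y i - z i| ≤ a⁻¹} := by ext y; simp [hsmall, Set.mem_iInter]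
    rw [this]
    exact MeasurableSet.iInter fun i =>
      (isClosed_le ((cont_coord i).sub continuous_const).abs continuous_const).measurableSet
  have hFcont : Continuous fun y => Ffun d a z y := cont_Ffun d a z
  have hFsqint : Integrable (fun y => ‖Ffun d a z y‖^2) μ := by
    refine Integrable.mono' (integrable_const ((a^d)^2))
      ((hFcont.norm.pow 2).aestronglyMeasurable) (Filter.Eventually.of_forall fun y => ?_)
    rw [Real.norm_eq_abs, abs_of_nonneg (by positivity)]
    refine pow_le_pow_left₀ (norm_nonneg _) ?_ 2
    exact abs_Ffun_le ha z y
  -- Step 1: lower bound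
  have h1 : ((23/24*a)^d)^2 * (μ small).toReal ≤ ∫ y, ‖Ffun d a z y‖^2 ∂μ := by
    rw [mul_comm, ← measureReal_def, ← smul_eq_mul]
    refine (setIntegral_ge_of_const_le hsmallmeas (measure_ne_top μ small)
      (fun y hy => ?_) hFsqint.integrableOn).trans
      (setIntegral_le_integral hFsqint (Filter.Eventually.of_forall fun y => by positivity))
    exact pow_le_pow_left₀ (by positivity) (abs_Ffun_ge ha z y hy) 2
  -- product measure setup
  haveI finBox : IsFiniteMeasure (volume.restrict (boxS d a)) := by
    constructor
    rw [Measure.restrict_apply_univ, volume_boxS d ha]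
    exact ENNReal.pow_lt_top ENNReal.ofReal_lt_top
  set P := (volume.restrict (boxS d a)).prod (volume.restrict (boxS d a)) with hP
  set g : E d → E d × E d → ℂ := fun y p =>
    Complex.exp (((inner ℝ p.1 (y - z) : ℝ) : ℂ) * Complex.I) *
      (starRingEnd ℂ) (Complex.exp (((inner ℝ p.2 (y - z) : ℝ) : ℂ) * Complex.I)) with hg
  have hgy : ∀ y, Ffun d a z y * (starRingEnd ℂ) (Ffun d a z y) = ∫ p, g y p ∂P := by
    intro y
    calc Ffun d a z y * (starRingEnd ℂ) (Ffun d a z y)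
        = (∫ t in boxS d a, Complex.exp (((inner ℝ t (y - z) : ℝ) : ℂ) * Complex.I)) *
          (∫ t in boxS d a, (starRingEnd ℂ)
            (Complex.exp (((inner ℝ t (y - z) : ℝ) : ℂ) * Complex.I))) := by
          rw [Ffun, integral_conj]
      _ = ∫ p, g y p ∂P := (integral_prod_mul _ _).symm
  have hgcont : Continuous fun q : E d × (E d × E d) => g q.1 q.2 := by
    have c1 : Continuous fun q : E d × (E d × E d) =>
        Complex.exp (((inner ℝ q.2.1 (q.1 - z) : ℝ) : ℂ) * Complex.I) :=
      Complex.continuous_exp.comp ((Complex.continuous_ofReal.comp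
        (Continuous.inner (continuous_fst.comp continuous_snd)
          (continuous_fst.sub continuous_const))).mul continuous_const)
    have c2 : Continuous fun q : E d × (E d × E d) =>
        (starRingEnd ℂ) (Complex.exp (((inner ℝ q.2.2 (q.1 - z) : ℝ) : ℂ) * Complex.I)) :=
      (Complex.continuous_exp.comp ((Complex.continuous_ofReal.comp
        (Continuous.inner (continuous_snd.comp continuous_snd)
          (continuous_fst.sub continuous_const))).mul continuous_const)).star
    exact c1.mul c2
  have hgint : Integrable (Function.uncurry g) (μ.prod P) := by
    refine Integrable.mono' (integrable_const 1) hgcont.aestronglyMeasurable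
      (Filter.Eventually.of_forall fun q => ?_)
    rw [Function.uncurry, hg]
    simp only
    rw [norm_mul, RCLike.norm_conj,
      Complex.norm_exp_ofReal_mul_I, Complex.norm_exp_ofReal_mul_I]
    norm_num
  have hswap : ∫ y, (∫ p, g y p ∂P) ∂μ = ∫ p, (∫ y, g y p ∂μ) ∂P :=
    integral_integral_swap hgint
  have hinner : ∀ p : E d × E d, (∫ y, g y p ∂μ) =
      Complex.exp (((-(inner ℝ (p.1 - p.2) z : ℝ) : ℝ) : ℂ) * Complex.I) *
        charFun' μ (p.1 - p.2) := by
    intro p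
    rw [charFun', ← MeasureTheory.integral_const_mul]
    congr 1
    funext y
    rw [hg]
    simp only
    rw [← Complex.exp_conj]
    simp only [map_mul, Complex.conj_ofReal, Complex.conj_I]
    rw [← Complex.exp_add, ← Complex.exp_add]
    congr 1
    have e1 : (inner ℝ p.1 (y - z) : ℝ) = (inner ℝ p.1 y : ℝ) - (inner ℝ p.1 z : ℝ) :=
      inner_sub_right _ _ _
    have e2 : (inner ℝ p.2 (y - z) : ℝ) = (inner ℝ p.2 y : ℝ) - (inner ℝ p.2 z : ℝ) :=
      inner_sub_right _ _ _
    have e3 : (inner ℝ (p.1 - p.2) z : ℝ) = (inner ℝ p.1 z : ℝ) - (inner ℝ p.2 z : ℝ) :=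
      inner_sub_left _ _ _
    have e4 : (inner ℝ (p.1 - p.2) y : ℝ) = (inner ℝ p.1 y : ℝ) - (inner ℝ p.2 y : ℝ) :=
      inner_sub_left _ _ _
    rw [e1, e2, e3, e4]
    push_cast
    ring
  have hnorm : ∀ p : E d × E d, ‖∫ y, g y p ∂μ‖ = ‖charFun' μ (p.1 - p.2)‖ := by
    intro p
    rw [hinner, norm_mul, Complex.norm_exp_ofReal_mul_I, one_mul]
  -- Step 2
  have h2 : ∫ y, ‖Ffun d a z y‖^2 ∂μ ≤ ∫ p, ‖charFun' μ (p.1 - p.2)‖ ∂P := by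
    have hre : ((∫ y, ‖Ffun d a z y‖^2 ∂μ : ℝ) : ℂ) =
        ∫ y, Ffun d a z y * (starRingEnd ℂ) (Ffun d a z y) ∂μ := by
      have h0 := ContinuousLinearMap.integral_comp_comm Complex.ofRealCLM hFsqint
      simp only [Complex.ofRealCLM_apply] at h0
      rw [← h0]
      congr 1
      funext y
      rw [Complex.mul_conj, Complex.normSq_eq_norm_sq]
    calc ∫ y, ‖Ffun d a z y‖^2 ∂μ ≤ ‖((∫ y, ‖Ffun d a z y‖^2 ∂μ : ℝ) : ℂ)‖ := by
          rw [Complex.norm_real, Real.norm_eq_abs]; exact le_abs_self _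
      _ = ‖∫ p, (∫ y, g y p ∂μ) ∂P‖ := by
          rw [hre, show (fun y => Ffun d a z y * (starRingEnd ℂ) (Ffun d a z y)) =
            fun y => ∫ p, g y p ∂P from funext hgy, hswap]
      _ ≤ ∫ p, ‖∫ y, g y p ∂μ‖ ∂P := norm_integral_le_integral_norm _
      _ = ∫ p, ‖charFun' μ (p.1 - p.2)‖ ∂P := by
          exact integral_congr_ae (Filter.Eventually.of_forall hnorm)
  -- Step 3
  have hqint : Integrable (fun p : E d × E d => ‖charFun' μ (p.1 - p.2)‖) P := by
    refine Integrable.mono' (integrable_const 1)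
      ((continuous_norm.comp ((cont_charFun' μ).comp
        (continuous_fst.sub continuous_snd))).aestronglyMeasurable)
      (Filter.Eventually.of_forall fun p => ?_)
    rw [Real.norm_eq_abs, abs_of_nonneg (norm_nonneg _)]
    exact abs_charFun'_le_one μ _
  have h3 : ∫ p, ‖charFun' μ (p.1 - p.2)‖ ∂P ≤ a^d * C := by
    rw [hP, MeasureTheory.integral_prod _ hqint]
    have hinner3 : ∀ s ∈ boxS d a,
        (∫ t in boxS d a, ‖charFun' μ (s - t)‖) ≤ C := by
      intro s hs
      set k : E d → ℝ := fun v =>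
        (boxS d a).indicator (fun _ => (1:ℝ)) (s - v) * ‖charFun' μ v‖ with hk
      have hk1 : (∫ t in boxS d a, ‖charFun' μ (s - t)‖) = ∫ t, k (s - t) := by
        rw [← integral_indicator (measurableSet_boxS d a)]
        congr 1
        funext t
        by_cases ht : t ∈ boxS d a
        · rw [indicator_of_mem ht, hk]; simp only [sub_sub_cancel, indicator_of_mem ht, one_mul]
        · rw [indicator_of_notMem ht, hk]
          simp only [sub_sub_cancel, indicator_of_notMem ht, zero_mul]
      rw [hk1, integral_sub_left_eq_self k volume s]
      have hmono : ∀ v, k v ≤ (bigBox d a).indicator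
          (fun v => ‖charFun' μ v‖) v := by
        intro v
        by_cases hv : s - v ∈ boxS d a
        · have hvbig : v ∈ bigBox d a := by
            intro i
            have h1' := hs i
            have h2' := hv i
            have hvi : v i = s i - (s - v) i := by simp
            rw [hvi]
            have hs1 : |s i| ≤ a/2 := abs_le.mpr ⟨h1'.1.le, h1'.2⟩
            have hs2 : |(s - v) i| ≤ a/2 := abs_le.mpr ⟨h2'.1.le, h2'.2⟩
            calc |s i - (s - v) i| ≤ |s i| + |(s - v) i| := abs_sub _ _
              _ ≤ a := by linarith
          simp only [hk, indicator_of_mem hv, indicator_of_mem hvbig, one_mul, le_refl]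
        · simp only [hk, indicator_of_notMem hv, zero_mul]
          exact indicator_nonneg (fun _ _ => norm_nonneg _) v
      have hCint : Integrable ((bigBox d a).indicator fun v => ‖charFun' μ v‖) := by
        rw [integrable_indicator_iff (measurableSet_bigBox d a)]
        exact intOn_absCharFun μ ha
      calc (∫ v, k v) ≤ ∫ v, (bigBox d a).indicator (fun v => ‖charFun' μ v‖) v :=
            integral_mono_of_nonneg
              (Filter.Eventually.of_forall fun v =>
                mul_nonneg (indicator_nonneg (fun _ _ => zero_le_one) _) (norm_nonneg _))
              hCint (Filter.Eventually.of_forall hmono)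
        _ = C := by rw [integral_indicator (measurableSet_bigBox d a)]
    have houter_int : Integrable
        (fun s => ∫ t, ‖charFun' μ (s - t)‖ ∂(volume.restrict (boxS d a)))
        (volume.restrict (boxS d a)) := hqint.integral_prod_left
    calc (∫ s in boxS d a, ∫ t in boxS d a, ‖charFun' μ (s - t)‖)
        ≤ ∫ _s in boxS d a, C := setIntegral_mono_on houter_int
          ((integrableOn_const_iff).mpr (Or.inr (by
            rw [volume_boxS d ha]; exact ENNReal.pow_lt_top ENNReal.ofReal_lt_top)))
          (measurableSet_boxS d a) hinner3
      _ = (volume (boxS d a)).toReal * C := by rw [setIntegral_const, smul_eq_mul, measureReal_def]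
      _ = a^d * C := by rw [volume_boxS d ha, ENNReal.toReal_pow, ENNReal.toReal_ofReal ha.le]
  -- conclude
  have hc0 : (0:ℝ) < ((23/24*a)^d)^2 := by positivity
  have hfinal : ((23/24*a)^d)^2 * (μ small).toReal ≤ a^d * C := h1.trans (h2.trans h3)
  have hX : (μ small).toReal ≤ (a^d * C) / (((23/24*a)^d)^2) :=
    (le_div_iff₀ hc0).mpr (by rw [mul_comm]; exact hfinal)
  refine hX.trans (le_of_eq ?_)
  have key : ((23/24*a)^2 * ((24/23:ℝ)^2 * a⁻¹)) = a := by field_simp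
  have hpow : (((23/24*a)^d)^2) * ((24/23:ℝ)^(2*d) * (a⁻¹)^d) = a^d := by
    rw [← pow_mul, mul_comm d 2, pow_mul, pow_mul, ← mul_pow, ← mul_pow, key]
  rw [div_eq_iff hc0.ne']
  calc (a^d * C) = (((23/24*a)^d)^2 * ((24/23:ℝ)^(2*d) * (a⁻¹)^d)) * C := by rw [hpow]
    _ = (24/23:ℝ)^(2*d) * a⁻¹^d * C * ((23/24*a)^d)^2 := by ring

theorem levy_concentration_bound' (d : ℕ) :
    ∃ c > (0:ℝ), ∀ μ : Measure (E d), IsProbabilityMeasure μ →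
      ∀ h : ℝ, 0 ≤ h → ∀ a : ℝ, 0 < a → ∀ x : E d,
        (μ {y | y - x ∈ cube d h}).toReal ≤
          c * (max a⁻¹ h) ^ d *
            ∫ t in {t : E d | ∀ i, |t i| ≤ a}, ‖charFun' μ t‖ := by
  refine ⟨(5/2)^d * (24/23)^(2*d), by positivity, ?_⟩
  intro μ hμ h hh a ha x
  haveI := hμ
  set M := max a⁻¹ h with hM
  have hMpos : 0 < M := lt_max_of_lt_left (inv_pos.mpr ha)
  set C := ∫ t in {t : E d | ∀ i, |t i| ≤ a}, ‖charFun' μ t‖ with hC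
  have hCnn : 0 ≤ C :=
    setIntegral_nonneg (measurableSet_bigBox d a) fun t _ => norm_nonneg _
  set N : ℕ := ⌈h*a/2⌉₊ + 1 with hN
  set zc : (Fin d → Fin N) → E d := fun k =>
    (WithLp.equiv 2 (Fin d → ℝ)).symm (fun i => x i + (2*((k i : ℕ):ℝ)+1) * a⁻¹) with hzc
  have hzci : ∀ k i, zc k i = x i + (2*((k i : ℕ):ℝ)+1) * a⁻¹ := by
    intro k i
    rfl
  -- covering
  have hcover : {y : E d | y - x ∈ cube d h} ⊆
      ⋃ k : Fin d → Fin N, {y : E d | ∀ i, |y i - zc k i| ≤ a⁻¹} := by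
    intro y hy
    have hyx : ∀ i, 0 ≤ y i - x i ∧ y i - x i < h := by
      intro i
      have h0 := hy i
      simp only [cube, mem_setOf_eq, mem_Ico] at h0
      constructor
      · have := h0.1; simpa using this
      · have := h0.2; simpa using this
    have hklt : ∀ i, ⌊(y i - x i) * a / 2⌋₊ < N := by
      intro i
      have h0 : 0 ≤ (y i - x i) * a / 2 := by
        have := (hyx i).1; positivity
      rw [Nat.floor_lt h0]
      have h1 : (y i - x i) * a / 2 < h * a / 2 := by
        have := (hyx i).2; nlinarith
      calc (y i - x i) * a / 2 < h * a / 2 := h1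
        _ ≤ (⌈h*a/2⌉₊ : ℝ) := Nat.le_ceil _
        _ < (N : ℝ) := by rw [hN]; push_cast; linarith
    refine mem_iUnion.mpr ⟨fun i => ⟨⌊(y i - x i) * a / 2⌋₊, hklt i⟩, fun i => ?_⟩
    obtain ⟨hw0, hwh⟩ := hyx i
    have h0 : 0 ≤ (y i - x i) * a / 2 := by positivity
    have h1 : (⌊(y i - x i) * a / 2⌋₊ : ℝ) ≤ (y i - x i) * a / 2 := Nat.floor_le h0
    have h2 : (y i - x i) * a / 2 < ⌊(y i - x i) * a / 2⌋₊ + 1 := Nat.lt_floor_add_one _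
    rw [hzci]
    have hval : (((⟨⌊(y i - x i) * a / 2⌋₊, hklt i⟩ : Fin N) : ℕ) : ℝ)
        = (⌊(y i - x i) * a / 2⌋₊ : ℝ) := rfl
    rw [hval, abs_le]
    have hainv : 0 < a⁻¹ := inv_pos.mpr ha
    have hcancel : a * a⁻¹ = 1 := mul_inv_cancel₀ ha.ne'
    have hb1 : (2*(⌊(y i - x i) * a / 2⌋₊:ℝ)) * a⁻¹ ≤ ((y i - x i) * a) * a⁻¹ :=
      mul_le_mul_of_nonneg_right (by linarith) hainv.le
    have hb2 : ((y i - x i) * a) * a⁻¹ ≤ (2*(⌊(y i - x i) * a / 2⌋₊:ℝ) + 2) * a⁻¹ :=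
      mul_le_mul_of_nonneg_right (by linarith) hainv.le
    have hsimp : ((y i - x i) * a) * a⁻¹ = y i - x i := by
      field_simp
    rw [hsimp] at hb1 hb2
    constructor
    · nlinarith
    · nlinarith
  -- sum the measures
  have hsum : (μ {y : E d | y - x ∈ cube d h}).toReal ≤
      ((N:ℝ))^d * ((24/23)^(2*d) * (a⁻¹)^d * C) := by
    calc (μ {y : E d | y - x ∈ cube d h}).toReal
        ≤ (μ (⋃ k : Fin d → Fin N, {y : E d | ∀ i, |y i - zc k i| ≤ a⁻¹})).toReal :=
          ENNReal.toReal_mono (measure_ne_top μ _) (measure_mono hcover)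
      _ ≤ (∑ k : Fin d → Fin N, μ {y : E d | ∀ i, |y i - zc k i| ≤ a⁻¹}).toReal := by
          refine ENNReal.toReal_mono ?_ (measure_iUnion_fintype_le _ _)
          exact (ENNReal.sum_lt_top.mpr fun k _ => measure_lt_top μ _).ne
      _ = ∑ k : Fin d → Fin N, (μ {y : E d | ∀ i, |y i - zc k i| ≤ a⁻¹}).toReal :=
          ENNReal.toReal_sum fun k _ => measure_ne_top μ _
      _ ≤ ∑ _k : Fin d → Fin N, ((24/23:ℝ)^(2*d) * (a⁻¹)^d * C) :=
          Finset.sum_le_sum fun k _ => lemmaA d μ ha (zc k)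
      _ = (Fintype.card (Fin d → Fin N) : ℝ) * ((24/23)^(2*d) * (a⁻¹)^d * C) := by
          rw [Finset.sum_const, nsmul_eq_mul, Finset.card_univ]
      _ = ((N:ℝ))^d * ((24/23)^(2*d) * (a⁻¹)^d * C) := by
          rw [Fintype.card_fun, Fintype.card_fin, Fintype.card_fin]
          push_cast
          ring
  -- bound N
  have hNle : (N:ℝ) ≤ (5/2) * (a * M) := by
    have h1 : ((⌈h*a/2⌉₊ : ℕ) : ℝ) < h*a/2 + 1 := Nat.ceil_lt_add_one (by positivity)
    have haM1 : 1 ≤ a * M := by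
      have : a * a⁻¹ ≤ a * M := mul_le_mul_of_nonneg_left (le_max_left _ _) ha.le
      rwa [mul_inv_cancel₀ ha.ne'] at this
    have haMh : a * h ≤ a * M := mul_le_mul_of_nonneg_left (le_max_right _ _) ha.le
    rw [hN]
    push_cast
    nlinarith
  have hNa : (N:ℝ) * a⁻¹ ≤ (5/2) * M := by
    have hainv : (0:ℝ) ≤ a⁻¹ := (inv_pos.mpr ha).le
    have := mul_le_mul_of_nonneg_right hNle hainv
    have heq : (5/2) * (a * M) * a⁻¹ = (5/2) * M := by field_simp
    linarith [heq ▸ this]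
  refine hsum.trans ?_
  have step : ((N:ℝ))^d * ((24/23)^(2*d) * (a⁻¹)^d * C) = ((N:ℝ)*a⁻¹)^d * ((24/23)^(2*d) * C) := by
    rw [mul_pow]; ring
  rw [step]
  have step2 : ((N:ℝ)*a⁻¹)^d ≤ ((5/2) * M)^d :=
    pow_le_pow_left₀ (by positivity) hNa d
  calc ((N:ℝ)*a⁻¹)^d * ((24/23)^(2*d) * C) ≤ ((5/2) * M)^d * ((24/23)^(2*d) * C) := by
        have hK : (0:ℝ) ≤ (24/23)^(2*d) * C := by positivity
        exact mul_le_mul_of_nonneg_right step2 hK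
    _ = (5/2)^d * (24/23)^(2*d) * M^d * C := by rw [mul_pow]; ring

end Aux

/-- **Lemma 3.1** (Lévy concentration function bound): there is a constant `c_d > 0` depending
only on the dimension `d` such that for every random variable `X` in ℝ^d (equivalently, every
probability law `μ` on ℝ^d), every `h ≥ 0` and every `a > 0`:
`Q_X(h) = sup_x P(X ∈ x + h[0,1)^d) ≤ c_d (max (1/a) h)^d ∫_{‖t‖_∞ ≤ a} |φ_X(t)| dt`. -/
theorem levy_concentration_bound (d : ℕ) :
    ∃ c > (0:ℝ), ∀ μ : Measure (E d), IsProbabilityMeasure μ →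
      ∀ h : ℝ, 0 ≤ h → ∀ a : ℝ, 0 < a → ∀ x : E d,
        (μ {y | y - x ∈ cube d h}).toReal ≤
          c * (max a⁻¹ h) ^ d *
            ∫ t in {t : E d | ∀ i, |t i| ≤ a}, ‖charFun' μ t‖ := by
  exact levy_concentration_bound' d
end
end
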